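/- The language Dup = {ww : w ∈ {0,1}*} is not in CFL/n; i.e., there do not exist an advice function h with |h(n)| = n and a context-free language L over a track alphabet such that for all x ∈ {0,1}*, x ∈ Dup iff ⟨x, h(|x|)⟩ ∈ L. In particular, Dup is not context-free. -/

import Mathlib

open ContextFreeGrammar

namespace DupProof

variable {T : Type} {g : ContextFreeGrammar.{0} T}

/-- `n`-step derivation. -/
def DerIn (g : ContextFreeGrammar.{0} T) : ℕ → List (Symbol T g.NT) → List (Symbol T g.NT) → Prop
  | 0, u, v => u = v
  | n+1, u, v => ∃ w, g.Produces u w ∧ DerIn g n w v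

lemma DerIn.derives {n : ℕ} {u v : List (Symbol T g.NT)} (h : DerIn g n u v) : g.Derives u v := by
  induction n generalizing u with
  | zero => exact h ▸ Relation.ReflTransGen.refl
  | succ n ih => obtain ⟨w, hw, h2⟩ := h; exact hw.trans_derives (ih h2)

lemma derives_iff_derIn {u v : List (Symbol T g.NT)} : g.Derives u v ↔ ∃ n, DerIn g n u v := by
  constructor
  · intro h
    induction h using Relation.ReflTransGen.head_induction_on with
    | refl => exact ⟨0, rfl⟩
    | head hp _ ih => obtain ⟨n, hn⟩ := ih; exact ⟨n+1, _, hp, hn⟩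
  · rintro ⟨n, hn⟩; exact hn.derives

lemma no_produces_of_terminals {x : List T} {v : List (Symbol T g.NT)}
    (h : g.Produces (x.map Symbol.terminal) v) : False := by
  obtain ⟨r, _, hrw⟩ := h
  obtain ⟨p, q, hu, -⟩ := hrw.exists_parts
  have : Symbol.nonterminal r.input ∈ x.map (Symbol.terminal : T → Symbol T g.NT) := by
    rw [hu]; simp
  simp only [List.mem_map] at this
  obtain ⟨t, -, ht⟩ := this
  cases ht

lemma derIn_terminals {n : ℕ} {x : List T} {v : List (Symbol T g.NT)}
    (h : DerIn g n (x.map Symbol.terminal) v) : v = x.map Symbol.terminal := by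
  cases n with
  | zero => exact h.symm
  | succ n => exact absurd h.choose_spec.1 (fun hp => no_produces_of_terminals hp)

lemma produces_append {α β v : List (Symbol T g.NT)} (h : g.Produces (α ++ β) v) :
    (∃ α', g.Produces α α' ∧ v = α' ++ β) ∨ (∃ β', g.Produces β β' ∧ v = α ++ β') := by
  obtain ⟨r, hr, hrw⟩ := h
  obtain ⟨p, q, hu, hv⟩ := hrw.exists_parts
  rw [List.append_assoc] at hu
  rcases List.append_eq_append_iff.mp hu with ⟨a', ha1, ha2⟩ | ⟨c', hc1, hc2⟩
  · right
    refine ⟨a' ++ r.output ++ q, ⟨r, hr, ?_⟩, ?_⟩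
    · rw [ha2, ← List.append_assoc]
      exact ContextFreeRule.rewrites_of_exists_parts r a' q
    rw [hv, ha1]
    simp
  · cases c' with
    | nil =>
      right
      simp only [List.append_nil] at hc1
      refine ⟨r.output ++ q, ⟨r, hr, ?_⟩, ?_⟩
      · have : β = [] ++ [Symbol.nonterminal r.input] ++ q := by simp [← hc2.symm]
        rw [this]
        exact ContextFreeRule.rewrites_of_exists_parts r [] q
      · rw [hv, hc1]; simp
    | cons s c'' =>
      left
      obtain ⟨hs, hq⟩ : Symbol.nonterminal r.input = s ∧ q = c'' ++ β := by
        have := hc2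
        rw [List.cons_append] at this
        exact ⟨(List.cons.injEq _ _ _ _ ▸ this).1, (List.cons.injEq _ _ _ _ ▸ this).2⟩
      refine ⟨p ++ r.output ++ c'', ⟨r, hr, ?_⟩, ?_⟩
      · rw [hc1, ← hs]
        have := ContextFreeRule.rewrites_of_exists_parts r p c''
        simpa using this
      · rw [hv, hq]; simp

lemma derIn_append_split {n : ℕ} {α β v : List (Symbol T g.NT)}
    (h : DerIn g n (α ++ β) v) :
    ∃ n1 n2 v1 v2, n1 + n2 ≤ n ∧ v = v1 ++ v2 ∧ DerIn g n1 α v1 ∧ DerIn g n2 β v2 := by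
  induction n generalizing α β with
  | zero => exact ⟨0, 0, α, β, le_refl 0, h.symm, rfl, rfl⟩
  | succ n ih =>
    obtain ⟨m, hm, hrest⟩ := h
    rcases produces_append hm with ⟨α', hα, rfl⟩ | ⟨β', hβ, rfl⟩
    · obtain ⟨n1, n2, v1, v2, hle, rfl, h1, h2⟩ := ih hrest
      exact ⟨n1 + 1, n2, v1, v2, by omega, rfl, ⟨α', hα, h1⟩, h2⟩
    · obtain ⟨n1, n2, v1, v2, hle, rfl, h1, h2⟩ := ih hrest
      exact ⟨n1, n2 + 1, v1, v2, by omega, rfl, h1, ⟨β', hβ, h2⟩⟩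

lemma derIn_list_split {n : ℕ} {σs : List (Symbol T g.NT)} {w : List T}
    (h : DerIn g n σs (w.map Symbol.terminal)) :
    ∃ ws : List (List T), w = ws.flatten ∧
      List.Forall₂ (fun s wi => ∃ m ≤ n, DerIn g m [s] (List.map Symbol.terminal wi)) σs ws := by
  induction σs generalizing w n with
  | nil =>
    refine ⟨[], ?_, List.Forall₂.nil⟩
    have : (w.map (Symbol.terminal : T → Symbol T g.NT)) = ([] : List T).map Symbol.terminal := by
      have := derIn_terminals (x := ([] : List T)) (by simpa using h)
      simpa using this.symm
    simpa using List.map_injective_iff.mpr (fun a b hab => Symbol.terminal.inj hab) this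
  | cons s σs ih =>
    rw [show s :: σs = [s] ++ σs from rfl] at h
    obtain ⟨n1, n2, v1, v2, hle, hv, h1, h2⟩ := derIn_append_split h
    obtain ⟨w1, w2, rfl, hw1, hw2⟩ := List.map_eq_append_iff.mp hv
    obtain ⟨ws, rfl, hall⟩ := ih (hw2 ▸ h2)
    refine ⟨w1 :: ws, by simp, List.Forall₂.cons ⟨n1, by omega, hw1 ▸ h1⟩ ?_⟩
    exact hall.imp (fun {a b} ⟨m, hm, hd⟩ => ⟨m, by omega, hd⟩)

lemma derives_flatten {σs : List (Symbol T g.NT)} {ws : List (List T)}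
    (h : List.Forall₂ (fun s wi => g.Derives [s] (List.map Symbol.terminal wi)) σs ws) :
    g.Derives σs (List.map Symbol.terminal ws.flatten) := by
  induction h with
  | nil => simpa using Relation.ReflTransGen.refl
  | @cons s wi σs' ws' h1 h2 ih =>
    have : g.Derives ([s] ++ σs') (List.map Symbol.terminal wi ++ List.map Symbol.terminal ws'.flatten) :=
      (h1.append_right σs').trans (ih.append_left _)
    simpa using this

/-- A one-symbol nonterminal string can only be rewritten by a rule for that nonterminal. -/
lemma produces_single_nt {A : g.NT} {v : List (Symbol T g.NT)}
    (h : g.Produces [Symbol.nonterminal A] v) :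
    ∃ r ∈ g.rules, r.input = A ∧ v = r.output := by
  obtain ⟨r, hr, hrw⟩ := h
  obtain ⟨p, q, hu, hv⟩ := hrw.exists_parts
  have hlen : p.length + (q.length + 1) = 1 := by
    have := congrArg List.length hu
    simpa [List.length_append] using this.symm
  have hp : p = [] := List.length_eq_zero_iff.mp (by omega)
  have hq : q = [] := List.length_eq_zero_iff.mp (by omega)
  subst hp hq
  simp only [List.nil_append, List.append_nil] at hu hv
  exact ⟨r, hr, (Symbol.nonterminal.inj (List.cons.injEq _ _ _ _ ▸ hu.symm).1), hv⟩

lemma single_nt_ne_terminals (A : g.NT) (x : List T) :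
    [Symbol.nonterminal A] ≠ x.map Symbol.terminal := by
  intro heq
  match x, heq with
  | [t], h => simp at h

/-- If a nonterminal derives a terminal word, it is the input of some rule. -/
lemma exists_rule_of_derIn {n : ℕ} {A : g.NT} {x : List T}
    (h : DerIn g n [Symbol.nonterminal A] (x.map Symbol.terminal)) :
    ∃ r ∈ g.rules, r.input = A := by
  cases n with
  | zero => exact absurd h (single_nt_ne_terminals A x)
  | succ n =>
    obtain ⟨v, hp, -⟩ := h
    obtain ⟨r, hr, hrA, -⟩ := produces_single_nt hp
    exact ⟨r, hr, hrA⟩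


lemma exists_big {α : Type*} (ws : List (List α)) (hne : ws ≠ []) :
    ∃ wi ∈ ws, ws.flatten.length ≤ ws.length * wi.length := by
  induction ws with
  | nil => cases hne rfl
  | cons x xs ih =>
    rcases eq_or_ne xs [] with rfl | hxs
    · exact ⟨x, List.mem_cons_self, by simp⟩
    · obtain ⟨wi, hmem, hb⟩ := ih hxs
      by_cases hc : x.length ≤ wi.length
      · refine ⟨wi, List.mem_cons_of_mem _ hmem, ?_⟩
        simp only [List.flatten_cons, List.length_append, List.length_cons]
        nlinarith
      · refine ⟨x, List.mem_cons_self, ?_⟩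
        have h2 : xs.flatten.length ≤ xs.length * x.length := by nlinarith [hb]
        simp only [List.flatten_cons, List.length_append, List.length_cons]
        nlinarith

lemma decomp {r : ℕ} (hr : ∀ ρ ∈ g.rules, ρ.output.length ≤ r) {M : ℕ} (hM : r ≤ M)
    {n : ℕ} {A : g.NT} {w : List T}
    (h : DerIn g n [Symbol.nonterminal A] (w.map Symbol.terminal)) (hw : M < w.length) :
    ∃ (B : g.NT) (u1 u2 u3 : List T),
      w = u1 ++ u2 ++ u3 ∧ M < u2.length * r ∧ u2.length ≤ M ∧
      g.Derives [Symbol.nonterminal A]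
        (u1.map Symbol.terminal ++ [Symbol.nonterminal B] ++ u3.map Symbol.terminal) ∧
      g.Derives [Symbol.nonterminal B] (u2.map Symbol.terminal) ∧
      ∃ ρ ∈ g.rules, ρ.input = B := by
  induction n using Nat.strong_induction_on generalizing A w with
  | _ n ih =>
  match n, h with
  | 0, h => exact absurd h (single_nt_ne_terminals A w)
  | n+1, h =>
    obtain ⟨v, hp, hrest⟩ := h
    obtain ⟨ρ, hρ, hin, rfl⟩ := produces_single_nt hp
    obtain ⟨ws, rfl, hall⟩ := derIn_list_split hrest
    set w := ws.flatten with hwdef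
    have hlenws : ρ.output.length = ws.length := hall.length_eq
    have hne : ws ≠ [] := by
      intro h0
      rw [h0] at hwdef
      simp [hwdef] at hw
    obtain ⟨wi, hwi, hbig⟩ := exists_big ws hne
    have hwsr : ws.length ≤ r := hlenws ▸ hr ρ hρ
    have hwir : M < wi.length * r := by
      have h1 : M < ws.length * wi.length := lt_of_lt_of_le hw hbig
      have h2 : ws.length * wi.length ≤ r * wi.length := Nat.mul_le_mul_right _ hwsr
      calc M < ws.length * wi.length := lt_of_lt_of_le hw hbig
        _ ≤ r * wi.length := Nat.mul_le_mul_right _ hwsr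
        _ = wi.length * r := Nat.mul_comm _ _
    -- split ws at wi
    obtain ⟨l1, l2, hws⟩ := List.append_of_mem hwi
    subst hws
    have hs1 := List.forall₂_take_append _ _ _ hall
    have hdr := List.forall₂_drop_append _ _ _ hall
    obtain ⟨s, σ2, hPs, hall2, hdrop⟩ := List.forall₂_cons_right_iff.mp hdr
    have hout : ρ.output = ρ.output.take l1.length ++ s :: σ2 := by
      conv_lhs => rw [← List.take_append_drop l1.length ρ.output]
      rw [hdrop]
    obtain ⟨m, hm, hD⟩ := hPs
    -- derive the two flanks fully
    have derσ1 : g.Derives (ρ.output.take l1.length) (List.map Symbol.terminal l1.flatten) :=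
      derives_flatten (hs1.imp (fun {a b} hab => hab.choose_spec.2.derives))
    have derσ2 : g.Derives σ2 (List.map Symbol.terminal l2.flatten) :=
      derives_flatten (hall2.imp (fun {a b} hab => hab.choose_spec.2.derives))
    have hstep : g.Produces [Symbol.nonterminal A] ρ.output :=
      ⟨ρ, hρ, hin ▸ ContextFreeRule.Rewrites.input_output⟩
    have hbase : g.Derives [Symbol.nonterminal A]
        (List.map Symbol.terminal l1.flatten ++ [s] ++ List.map Symbol.terminal l2.flatten) := by
      refine hstep.trans_derives ?_
      rw [hout]
      have t1 : g.Derives (ρ.output.take l1.length ++ s :: σ2)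
          (List.map Symbol.terminal l1.flatten ++ s :: σ2) := derσ1.append_right _
      have t2 := derσ2.append_left (List.map Symbol.terminal l1.flatten ++ [s])
      refine t1.trans ?_
      simpa [List.append_assoc] using t2
    match s, hD, hbase with
    | Symbol.terminal t, hD, hbase =>
      exfalso
      have : List.map (Symbol.terminal : T → Symbol T g.NT) wi = List.map Symbol.terminal [t] := by
        exact derIn_terminals (x := [t]) (v := List.map Symbol.terminal wi) (by simpa using hD)
      have hwi1 : wi.length = 1 := by
        have := congrArg List.length this
        simpa using this
      rw [hwi1, one_mul] at hwir
      omega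
    | Symbol.nonterminal B', hD, hbase =>
      by_cases hcase : wi.length ≤ M
      · refine ⟨B', l1.flatten, wi, l2.flatten, by rw [hwdef]; simp, hwir, hcase, ?_, hD.derives,
          exists_rule_of_derIn hD⟩
        exact hbase
      · obtain ⟨B, v1, v2, v3, hsplit, hlb, hub, dvC, dv2, hrule⟩ :=
          ih m (by omega) hD (by omega)
        refine ⟨B, l1.flatten ++ v1, v2, v3 ++ l2.flatten, ?_, hlb, hub, ?_, dv2, hrule⟩
        · rw [hwdef]; simp [hsplit, List.append_assoc]
        · have hx : g.Derives
              (List.map Symbol.terminal l1.flatten ++ [Symbol.nonterminal B'] ++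
                List.map Symbol.terminal l2.flatten)
              (List.map Symbol.terminal l1.flatten ++
                (List.map Symbol.terminal v1 ++ [Symbol.nonterminal B] ++
                  List.map Symbol.terminal v3) ++ List.map Symbol.terminal l2.flatten) := by
            have := (dvC.append_left (List.map Symbol.terminal l1.flatten)).append_right
              (List.map Symbol.terminal l2.flatten)
            simpa [List.append_assoc] using this
          have := hbase.trans hx
          simpa [List.map_append, List.append_assoc] using this


lemma zip_fst_snd {α β : Type*} (l : List (α × β)) :
    (l.map Prod.fst).zip (l.map Prod.snd) = l := by
  induction l with
  | nil => rfl
  | cons a l ih => simp [ih]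

/-- getElem in a triple append, left part -/
lemma get3_left {α : Type*} {l1 l2 l3 : List α} {q : ℕ} (h : q < l1.length)
    (hq : q < (l1 ++ l2 ++ l3).length) :
    (l1 ++ l2 ++ l3)[q] = l1[q] := by
  rw [List.getElem_append_left (by simp; omega), List.getElem_append_left h]

lemma get3_mid {α : Type*} {l1 l2 l3 : List α} {q : ℕ} (h1 : l1.length ≤ q)
    (h2 : q < l1.length + l2.length) (hq : q < (l1 ++ l2 ++ l3).length) :
    (l1 ++ l2 ++ l3)[q] = l2[q - l1.length]'(by omega) := by
  rw [List.getElem_append_left (bs := l3) (by simp; omega), List.getElem_append_right h1]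

lemma get3_right {α : Type*} {l1 l2 l3 : List α} {q : ℕ} (h1 : l1.length + l2.length ≤ q)
    (hq : q < (l1 ++ l2 ++ l3).length) :
    (l1 ++ l2 ++ l3)[q] = l3[q - l1.length - l2.length]'(by simp at hq; omega) := by
  rw [List.getElem_append_right (by simp; omega : (l1 ++ l2).length ≤ q)]
  congr 1
  simp
  omega


/-- The swap argument: two words of `Dup` whose track strings admit decompositions with the
same nonterminal, position, and window length (window within `[0, 2k)`, length `≤ k`) must
agree at every position covered exactly once by the window. -/
lemma agree' {Γ : Type} {g : ContextFreeGrammar.{0} (Bool × Γ)} {k i ℓ : ℕ} {a : List Γ}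
    (ha : a.length = 2 * k)
    (hiffn : ∀ x : List Bool, x.length = 2 * k → ((∃ v, x = v ++ v) ↔ x.zip a ∈ g.language))
    {w w' : Fin k → Bool} {B : g.NT} {u1 u2 u3 u1' u2' u3' : List (Bool × Γ)}
    (hsp : (List.ofFn w ++ List.ofFn w).zip a = u1 ++ u2 ++ u3)
    (hsp' : (List.ofFn w' ++ List.ofFn w').zip a = u1' ++ u2' ++ u3')
    (hi : u1.length = i) (hi' : u1'.length = i)
    (hl : u2.length = ℓ) (hl' : u2'.length = ℓ) (hlk : ℓ ≤ k)
    (hD1 : g.Derives [Symbol.nonterminal g.initial]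
      (u1.map Symbol.terminal ++ [Symbol.nonterminal B] ++ u3.map Symbol.terminal))
    (hD2' : g.Derives [Symbol.nonterminal B] (u2'.map Symbol.terminal))
    (p : Fin k)
    (hp : (i ≤ (p : ℕ) ∧ (p : ℕ) < i + ℓ) ∨ (i ≤ (p : ℕ) + k ∧ (p : ℕ) + k < i + ℓ)) :
    w p = w' p := by
  classical
  set x : List Bool := List.ofFn w ++ List.ofFn w with hxdef
  set x' : List Bool := List.ofFn w' ++ List.ofFn w' with hxdef'
  have hxl : x.length = 2 * k := by simp [hxdef]; omega
  have hxl' : x'.length = 2 * k := by simp [hxdef']; omega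
  have htl : (x.zip a).length = 2 * k := by simp [hxl, ha]
  have htl' : (x'.zip a).length = 2 * k := by simp [hxl', ha]
  have hsum : u1.length + u2.length + u3.length = 2 * k := by
    have := congrArg List.length hsp; simp [htl] at this; omega
  have hsum' : u1'.length + u2'.length + u3'.length = 2 * k := by
    have := congrArg List.length hsp'; simp [htl'] at this; omega
  -- the swapped string is generated
  have hz : g.Derives [Symbol.nonterminal g.initial]
      (List.map Symbol.terminal (u1 ++ u2' ++ u3)) := by
    refine hD1.trans ?_
    have := (hD2'.append_left (u1.map Symbol.terminal)).append_right (u3.map Symbol.terminal)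
    simpa [List.map_append, List.append_assoc] using this
  set z : List (Bool × Γ) := u1 ++ u2' ++ u3 with hzdef
  have hzlen : z.length = 2 * k := by simp [hzdef]; omega
  have hzmem : z ∈ g.language := hz
  -- second components of z form exactly `a`
  have hsa : a = u1.map Prod.snd ++ u2.map Prod.snd ++ u3.map Prod.snd := by
    have : (x.zip a).map Prod.snd = a := List.map_snd_zip (by omega)
    rw [hsp] at this
    simpa [List.map_append] using this.symm
  have hsa' : a = u1'.map Prod.snd ++ u2'.map Prod.snd ++ u3'.map Prod.snd := by
    have : (x'.zip a).map Prod.snd = a := List.map_snd_zip (by omega)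
    rw [hsp'] at this
    simpa [List.map_append] using this.symm
  have hs2 : u2'.map Prod.snd = u2.map Prod.snd := by
    have heq : u1.map Prod.snd ++ u2.map Prod.snd ++ u3.map Prod.snd
        = u1'.map Prod.snd ++ u2'.map Prod.snd ++ u3'.map Prod.snd := hsa.symm.trans hsa'
    have h12 := List.append_inj heq (by simp [hi, hi', hl, hl'])
    exact (List.append_inj h12.1 (by simp [hi, hi'])).2.symm
  have hza : z.map Prod.snd = a := by
    rw [hzdef]
    simp only [List.map_append]
    rw [hs2]
    exact hsa.symm
  -- y := first components of z
  set y : List Bool := z.map Prod.fst with hydef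
  have hylen : y.length = 2 * k := by simp [hydef, hzlen]
  have hyz : y.zip a = z := by rw [hydef, ← hza]; exact zip_fst_snd z
  have hydup : ∃ v, y = v ++ v := (hiffn y hylen).mpr (by rw [hyz]; exact hzmem)
  obtain ⟨v, hv⟩ := hydup
  have hvlen : v.length = k := by
    have := congrArg List.length hv; rw [hylen] at this; simp at this; omega
  have hyper : ∀ q : ℕ, (hq : q < k) → y[q]'(by omega) = y[q + k]'(by omega) := by
    intro q hq
    simp only [hv]
    rw [List.getElem_append_left (by omega), List.getElem_append_right (by omega)]
    congr 1
    omega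
  -- first components
  have hfx : x = u1.map Prod.fst ++ u2.map Prod.fst ++ u3.map Prod.fst := by
    have : (x.zip a).map Prod.fst = x := List.map_fst_zip (by omega)
    rw [hsp] at this
    simpa [List.map_append] using this.symm
  have hfx' : x' = u1'.map Prod.fst ++ u2'.map Prod.fst ++ u3'.map Prod.fst := by
    have : (x'.zip a).map Prod.fst = x' := List.map_fst_zip (by omega)
    rw [hsp'] at this
    simpa [List.map_append] using this.symm
  have hfy : y = u1.map Prod.fst ++ u2'.map Prod.fst ++ u3.map Prod.fst := by
    rw [hydef, hzdef]; simp [List.map_append]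
  -- lengths of first-component pieces
  have lf1 : (u1.map Prod.fst).length = i := by simpa using hi
  have lf2 : (u2.map Prod.fst).length = ℓ := by simpa using hl
  have lf1' : (u1'.map Prod.fst).length = i := by simpa using hi'
  have lf2' : (u2'.map Prod.fst).length = ℓ := by simpa using hl'
  have lf3 : (u3.map Prod.fst).length = 2 * k - i - ℓ := by simp; omega
  have lf3' : (u3'.map Prod.fst).length = 2 * k - i - ℓ := by simp; omega
  have hil : i + ℓ ≤ 2 * k := by omega
  -- x values vs w
  have hxval : ∀ q : ℕ, (hq : q < 2 * k) → x[q]'(by omega) =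
      (if h : q < k then w ⟨q, h⟩ else w ⟨q - k, by omega⟩) := by
    intro q hq
    simp only [hxdef]
    split
    · next h =>
      rw [List.getElem_append_left (by simpa using h)]
      simp
    · next h =>
      rw [List.getElem_append_right (by simp; omega)]
      simp
  have hxval' : ∀ q : ℕ, (hq : q < 2 * k) → x'[q]'(by omega) =
      (if h : q < k then w' ⟨q, h⟩ else w' ⟨q - k, by omega⟩) := by
    intro q hq
    simp only [hxdef']
    split
    · next h =>
      rw [List.getElem_append_left (by simpa using h)]
      simp
    · next h =>
      rw [List.getElem_append_right (by simp; omega)]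
      simp
  -- y agrees with x' inside the window, x outside
  have hyin : ∀ q : ℕ, (h1 : i ≤ q) → (h2 : q < i + ℓ) → y[q]'(by omega) = x'[q]'(by omega) := by
    intro q h1 h2
    simp only [hfy, hfx']
    rw [get3_mid (by omega) (by rw [lf1, lf2']; omega),
      get3_mid (by omega) (by rw [lf1', lf2']; omega)]
    congr 1 <;> omega
  have hyout : ∀ q : ℕ, (hq : q < 2 * k) → (q < i ∨ i + ℓ ≤ q) → y[q]'(by omega) = x[q]'(by omega) := by
    intro q hq hcase
    rcases hcase with hcl | hcr
    · simp only [hfy, hfx]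
      rw [get3_left (by omega), get3_left (by omega)]
    · simp only [hfy, hfx]
      rw [get3_right (by rw [lf1, lf2']; omega), get3_right (by rw [lf1, lf2]; omega)]
      congr 1
      omega
  -- finish
  rcases hp with ⟨h1, h2⟩ | ⟨h1, h2⟩
  · -- p inside window, p+k outside
    have hpk1 : i + ℓ ≤ (p : ℕ) + k := by omega
    have e1 : y[(p : ℕ)]'(by omega) = w' p := by
      rw [hyin _ h1 h2, hxval' _ (by omega)]
      simp [p.isLt]
    have e2 : y[(p : ℕ) + k]'(by omega) = w p := by
      rw [hyout _ (by omega) (Or.inr hpk1), hxval _ (by omega)]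
      rw [dif_neg (by omega)]
      congr 1
      ext
      simp
    have := hyper p p.isLt
    rw [e1, e2] at this
    exact this.symm
  · -- p+k inside window, p outside
    have hpo : (p : ℕ) < i := by omega
    have e1 : y[(p : ℕ)]'(by omega) = w p := by
      rw [hyout _ (by omega) (Or.inl hpo), hxval _ (by omega)]
      simp [p.isLt]
    have e2 : y[(p : ℕ) + k]'(by omega) = w' p := by
      rw [hyin _ h1 h2, hxval' _ (by omega)]
      rw [dif_neg (by omega)]
      congr 1
      ext
      simp
    have := hyper p p.isLt
    rw [e1, e2] at this
    exact this


lemma cube_lt_two_pow {K : ℕ} (hK : 10 ≤ K) : K ^ 3 < 2 ^ K := by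
  induction K with
  | zero => omega
  | succ K ih =>
    rcases Nat.lt_or_ge K 10 with h | h
    · have : K = 9 := by omega
      subst this
      norm_num
    · have h1 := ih h
      have hK3 : 10 * K ^ 2 ≤ K ^ 3 := by nlinarith
      have hK2 : 10 * K ≤ K ^ 2 := by nlinarith
      have h2 : (K + 1) ^ 3 ≤ 2 * K ^ 3 := by nlinarith
      calc (K + 1) ^ 3 ≤ 2 * K ^ 3 := h2
        _ < 2 * 2 ^ K := by omega
        _ = 2 ^ (K + 1) := by ring

lemma card_H {k i ℓ : ℕ} (hk : 0 < k) (hil : i + ℓ ≤ 2 * k) (hlk : ℓ ≤ k) :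
    ℓ ≤ (Finset.univ.filter (fun p : Fin k =>
      (i ≤ (p : ℕ) ∧ (p : ℕ) < i + ℓ) ∨ (i ≤ (p : ℕ) + k ∧ (p : ℕ) + k < i + ℓ))).card := by
  classical
  have key : ∀ q : ℕ, k ≤ q → q < 2 * k → q % k = q - k := by
    intro q h1 h2
    rw [Nat.mod_eq_sub_mod h1, Nat.mod_eq_of_lt (by omega)]
  have hmaps : ∀ q ∈ Finset.Ico i (i + ℓ),
      (⟨q % k, Nat.mod_lt _ hk⟩ : Fin k) ∈ Finset.univ.filter (fun p : Fin k =>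
      (i ≤ (p : ℕ) ∧ (p : ℕ) < i + ℓ) ∨ (i ≤ (p : ℕ) + k ∧ (p : ℕ) + k < i + ℓ)) := by
    intro q hq
    rw [Finset.mem_Ico] at hq
    rw [Finset.mem_filter]
    refine ⟨Finset.mem_univ _, ?_⟩
    rcases Nat.lt_or_ge q k with h | h
    · have hm : q % k = q := Nat.mod_eq_of_lt h
      left
      show i ≤ q % k ∧ q % k < i + ℓ
      omega
    · have hm : q % k = q - k := key q h (by omega)
      right
      show i ≤ q % k + k ∧ q % k + k < i + ℓ
      omega
  have hinj : Set.InjOn (fun q : ℕ => (⟨q % k, Nat.mod_lt _ hk⟩ : Fin k))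
      (Finset.Ico i (i + ℓ)) := by
    intro q hq q' hq' heq
    simp only [Finset.coe_Ico, Set.mem_Ico] at hq hq'
    have heq2 : q % k = q' % k := by
      have := congrArg (fun p : Fin k => (p : ℕ)) heq
      simpa using this
    rcases Nat.lt_or_ge q k with h | h <;> rcases Nat.lt_or_ge q' k with h' | h'
    · rw [Nat.mod_eq_of_lt h, Nat.mod_eq_of_lt h'] at heq2; omega
    · rw [Nat.mod_eq_of_lt h, key q' h' (by omega)] at heq2; omega
    · rw [key q h (by omega), Nat.mod_eq_of_lt h'] at heq2; omega
    · rw [key q h (by omega), key q' h' (by omega)] at heq2; omega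
  have := Finset.card_le_card_of_injOn _ hmaps hinj
  simpa using this

lemma core {Γ : Type} (h : ℕ → List Γ) (hlen : ∀ n, (h n).length = n)
    (g : ContextFreeGrammar.{0} (Bool × Γ))
    (hiff : ∀ x : List Bool, (∃ v, x = v ++ v) ↔ x.zip (h x.length) ∈ g.language) : False := by
  classical
  set r := max (g.rules.sup fun ρ => ρ.output.length) 2 with hrdef
  have hr : ∀ ρ ∈ g.rules, ρ.output.length ≤ r := by
    intro ρ hρ
    have h1 : ρ.output.length ≤ g.rules.sup (fun ρ => ρ.output.length) :=
      Finset.le_sup (f := fun ρ : ContextFreeRule (Bool × Γ) g.NT => ρ.output.length) hρ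
    exact le_trans h1 (le_max_left _ _)
  have hr2 : 2 ≤ r := le_max_right _ _
  set R := g.rules.card with hRdef
  set K := max ((R + 1) * ((2 * r + 1) * (2 * r + 1))) 10 with hKdef
  have hK10 : 10 ≤ K := le_max_right _ _
  have hKc : (R + 1) * ((2 * r + 1) * (2 * r + 1)) ≤ K := le_max_left _ _
  set k := r * K with hkdef
  have hkr : r ≤ k := by
    rw [hkdef]
    have := Nat.mul_le_mul_left r (show 1 ≤ K by omega)
    simpa using this
  have hk1 : 1 ≤ k := by omega
  set a := h (2 * k) with hadef
  have ha : a.length = 2 * k := hlen (2 * k)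
  have hiffn : ∀ x : List Bool, x.length = 2 * k → ((∃ v, x = v ++ v) ↔ x.zip a ∈ g.language) := by
    intro x hx
    have := hiff x
    rwa [hx] at this
  have hex : ∀ w : Fin k → Bool, ∃ (B : g.NT) (u1 u2 u3 : List (Bool × Γ)),
      (List.ofFn w ++ List.ofFn w).zip a = u1 ++ u2 ++ u3 ∧ k < u2.length * r ∧ u2.length ≤ k ∧
      g.Derives [Symbol.nonterminal g.initial]
        (u1.map Symbol.terminal ++ [Symbol.nonterminal B] ++ u3.map Symbol.terminal) ∧
      g.Derives [Symbol.nonterminal B] (u2.map Symbol.terminal) ∧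
      ∃ ρ ∈ g.rules, ρ.input = B := by
    intro w
    have hxlen : (List.ofFn w ++ List.ofFn w).length = 2 * k := by simp; omega
    have hmem : (List.ofFn w ++ List.ofFn w).zip a ∈ g.language :=
      (hiffn _ hxlen).mp ⟨List.ofFn w, rfl⟩
    rw [ContextFreeGrammar.mem_language_iff] at hmem
    obtain ⟨n0, hder⟩ := derives_iff_derIn.mp hmem
    have hwlen : k < ((List.ofFn w ++ List.ofFn w).zip a).length := by
      rw [List.length_zip, hxlen, ha]
      omega
    exact decomp hr hkr hder hwlen
  choose B u1 u2 u3 hsp hlb hub hD1 hD2 hBr using hex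
  -- classify
  set pick : g.NT → Option {ρ : ContextFreeRule (Bool × Γ) g.NT // ρ ∈ g.rules} := fun b =>
    if hb : ∃ ρ ∈ g.rules, ρ.input = b then some ⟨hb.choose, hb.choose_spec.1⟩ else none
    with hpickdef
  have pick_spec : ∀ b (hb : ∃ ρ ∈ g.rules, ρ.input = b),
      ∃ s : {ρ : ContextFreeRule (Bool × Γ) g.NT // ρ ∈ g.rules},
        pick b = some s ∧ s.1.input = b := by
    intro b hb
    refine ⟨⟨hb.choose, hb.choose_spec.1⟩, ?_, hb.choose_spec.2⟩
    simp only [hpickdef]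
    rw [dif_pos hb]
  set clN : (Fin k → Bool) → Option {ρ : ContextFreeRule (Bool × Γ) g.NT // ρ ∈ g.rules} × ℕ × ℕ :=
    fun w => (pick (B w), (u1 w).length, (u2 w).length) with hclNdef
  set XF : Finset (Option {ρ : ContextFreeRule (Bool × Γ) g.NT // ρ ∈ g.rules} × ℕ × ℕ) :=
    Finset.univ ×ˢ (Finset.range (2 * k + 1) ×ˢ Finset.range (2 * k + 1)) with hXFdef
  have hsplitlen : ∀ w : Fin k → Bool,
      (u1 w).length + (u2 w).length + (u3 w).length = 2 * k := by
    intro w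
    have := congrArg List.length (hsp w)
    rw [List.length_zip, ha] at this
    simp at this
    omega
  have hmaps : ∀ w ∈ (Finset.univ : Finset (Fin k → Bool)), clN w ∈ XF := by
    intro w _
    have h1 := hsplitlen w
    simp only [hclNdef, hXFdef, Finset.mem_product, Finset.mem_univ, Finset.mem_range, true_and]
    omega
  have hcount := Finset.card_eq_sum_card_fiberwise hmaps
  -- fiber bound
  have hfib : ∀ τ ∈ XF,
      (Finset.univ.filter (fun w => clN w = τ)).card ≤ 2 ^ (k - (k / r + 1)) := by
    intro τ _
    rcases (Finset.univ.filter (fun w => clN w = τ)).eq_empty_or_nonempty with he | ⟨w0, hw0⟩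
    · rw [he]
      simp
    · rw [Finset.mem_filter] at hw0
      set i := (u1 w0).length with hidef
      set ℓ := (u2 w0).length with hldef
      set H : Finset (Fin k) := Finset.univ.filter (fun p : Fin k =>
        (i ≤ (p : ℕ) ∧ (p : ℕ) < i + ℓ) ∨ (i ≤ (p : ℕ) + k ∧ (p : ℕ) + k < i + ℓ)) with hHdef
      -- all members of the fiber agree on H
      have hagree : ∀ w, clN w = τ → ∀ w', clN w' = τ → ∀ p ∈ H, w p = w' p := by
        intro w hw w' hw' p hpH
        have hcl : clN w = clN w' := hw.trans hw'.symm
        have hcl0 : clN w = clN w0 := hw.trans hw0.2.symm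
        have hBB : B w = B w' := by
          obtain ⟨s1, e1, f1⟩ := pick_spec (B w) (hBr w)
          obtain ⟨s2, e2, f2⟩ := pick_spec (B w') (hBr w')
          have : pick (B w) = pick (B w') := congrArg Prod.fst hcl
          rw [e1, e2] at this
          rw [← f1, ← f2, Option.some_inj.mp this]
        have hi1 : (u1 w).length = i := by
          have := congrArg (fun t => t.2.1) hcl0; simpa [hclNdef] using this
        have hi2 : (u1 w').length = i := by
          have := congrArg (fun t => t.2.1) (hw'.trans hw0.2.symm); simpa [hclNdef] using this
        have hl1 : (u2 w).length = ℓ := by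
          have := congrArg (fun t => t.2.2) hcl0; simpa [hclNdef] using this
        have hl2 : (u2 w').length = ℓ := by
          have := congrArg (fun t => t.2.2) (hw'.trans hw0.2.symm); simpa [hclNdef] using this
        rw [hHdef, Finset.mem_filter] at hpH
        exact agree' ha hiffn (hsp w) (hsp w') hi1 hi2 hl1 hl2 (hl1 ▸ hub w)
          (hD1 w) (hBB ▸ hD2 w') p hpH.2
      -- injection into functions on the complement of H
      have hinj : Set.InjOn (fun (w : Fin k → Bool) (p : ↥(Hᶜ : Finset (Fin k))) => w p.1)
          (Finset.univ.filter (fun w => clN w = τ)) := by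
        intro w hw w' hw' heq
        rw [Finset.mem_coe, Finset.mem_filter] at hw hw'
        funext p
        by_cases hpH : p ∈ H
        · exact hagree w hw.2 w' hw'.2 p hpH
        · have := congrFun heq ⟨p, Finset.mem_compl.mpr hpH⟩
          simpa using this
      have hcard1 : (Finset.univ.filter (fun w => clN w = τ)).card
          ≤ 2 ^ (k - H.card) := by
        have h1 := Finset.card_le_card_of_injOn _ (fun w _ => Finset.mem_univ
          ((fun (p : ↥(Hᶜ : Finset (Fin k))) => w p.1))) hinj
        calc (Finset.univ.filter (fun w => clN w = τ)).card
            ≤ (Finset.univ : Finset (↥(Hᶜ : Finset (Fin k)) → Bool)).card := h1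
          _ = 2 ^ (k - H.card) := by
              rw [Finset.card_univ, Fintype.card_fun, Fintype.card_bool, Fintype.card_coe,
                Finset.card_compl, Fintype.card_fin]
      have hHge : k / r + 1 ≤ H.card := by
        have hil : i + ℓ ≤ 2 * k := by have := hsplitlen w0; omega
        have hlH : ℓ ≤ H.card := card_H (by omega) hil (hub w0)
        have hlgt : k / r + 1 ≤ ℓ := by
          by_contra hcon
          push_neg at hcon
          have h1 : ℓ ≤ k / r := by omega
          have h2 : ℓ * r ≤ (k / r) * r := Nat.mul_le_mul_right _ h1
          have h3 := Nat.div_mul_le_self k r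
          exact absurd (hlb w0) (not_lt.mpr (le_trans h2 h3))
        omega
      calc (Finset.univ.filter (fun w => clN w = τ)).card ≤ 2 ^ (k - H.card) := hcard1
        _ ≤ 2 ^ (k - (k / r + 1)) := Nat.pow_le_pow_right (by norm_num) (by omega)
  -- assemble the counting contradiction
  have hXFcard : XF.card = (R + 1) * ((2 * k + 1) * (2 * k + 1)) := by
    simp [hXFdef, Finset.card_product, Fintype.card_option, Fintype.card_coe, hRdef]
  have hbig : 2 ^ k ≤ (R + 1) * ((2 * k + 1) * (2 * k + 1)) * 2 ^ (k - (k / r + 1)) := by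
    have h1 : (Finset.univ : Finset (Fin k → Bool)).card = 2 ^ k := by simp
    have h2 := Finset.sum_le_card_nsmul XF _ _ hfib
    rw [← hcount, h1, smul_eq_mul, hXFcard] at h2
    exact h2
  have hdivK : k / r = K := by
    rw [hkdef]
    exact Nat.mul_div_cancel_left K (by omega)
  have hmk : K + 1 ≤ k := by
    have h2K := Nat.mul_le_mul_right K hr2
    rw [← hkdef] at h2K
    omega
  have hcancel : 2 ^ (K + 1) ≤ (R + 1) * ((2 * k + 1) * (2 * k + 1)) := by
    have hsplit2 : 2 ^ k = 2 ^ (K + 1) * 2 ^ (k - (K + 1)) := by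
      rw [← pow_add]
      congr 1
      omega
    rw [hdivK] at hbig
    rw [hsplit2] at hbig
    exact Nat.le_of_mul_le_mul_right (by
      calc 2 ^ (K + 1) * 2 ^ (k - (K + 1)) ≤ _ := hbig) (Nat.pow_pos (by norm_num))
  -- numeric contradiction
  have hn1 : 2 * k + 1 ≤ (2 * r + 1) * K := by
    have hx : 2 * k + K = (2 * r + 1) * K := by rw [hkdef]; ring
    omega
  have hle : (R + 1) * ((2 * k + 1) * (2 * k + 1)) ≤ K ^ 3 := by
    calc (R + 1) * ((2 * k + 1) * (2 * k + 1))
        ≤ (R + 1) * (((2 * r + 1) * K) * ((2 * r + 1) * K)) := by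
          apply Nat.mul_le_mul_left
          exact Nat.mul_le_mul hn1 hn1
      _ = (R + 1) * ((2 * r + 1) * (2 * r + 1)) * (K * K) := by ring
      _ ≤ K * (K * K) := Nat.mul_le_mul_right _ hKc
      _ = K ^ 3 := by ring
  have hfin : K ^ 3 < 2 ^ (K + 1) := lt_of_lt_of_le (cube_lt_two_pow hK10)
    (Nat.pow_le_pow_right (by norm_num) (by omega))
  omega


/-! ### Lifting a grammar over `Bool` to one over `Bool × Unit` -/

def liftSym {N : Type} : Symbol Bool N → Symbol (Bool × Unit) N
  | .terminal t => .terminal (t, ())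
  | .nonterminal A => .nonterminal A

def downSym {N : Type} : Symbol (Bool × Unit) N → Symbol Bool N
  | .terminal t => .terminal t.1
  | .nonterminal A => .nonterminal A

@[simp] lemma down_lift {N : Type} (s : Symbol Bool N) : downSym (liftSym s) = s := by
  cases s <;> rfl

@[simp] lemma downSym_terminal {N : Type} (t : Bool × Unit) :
    (downSym (Symbol.terminal t) : Symbol Bool N) = Symbol.terminal t.1 := rfl

@[simp] lemma downSym_nonterminal {N : Type} (A : N) :
    (downSym (Symbol.nonterminal A) : Symbol Bool N) = Symbol.nonterminal A := rfl

def liftRule {N : Type} (r : ContextFreeRule Bool N) : ContextFreeRule (Bool × Unit) N :=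
  ⟨r.input, r.output.map liftSym⟩

lemma liftSym_inj {N : Type} : Function.Injective (@liftSym N) := by
  intro s t hst
  cases s <;> cases t <;> simp [liftSym] at hst <;> simp [hst]

lemma liftRule_inj {N : Type} : Function.Injective (@liftRule N) := by
  intro r1 r2 h12
  obtain ⟨h1, h2⟩ := ContextFreeRule.ext_iff.mp h12
  exact ContextFreeRule.ext h1 (List.map_injective_iff.mpr liftSym_inj h2)

def liftG (g : ContextFreeGrammar.{0} Bool) : ContextFreeGrammar.{0} (Bool × Unit) :=
  ⟨g.NT, g.initial, g.rules.map ⟨liftRule, liftRule_inj⟩⟩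

lemma lift_rewrites {N : Type} {r : ContextFreeRule Bool N} {u v : List (Symbol Bool N)}
    (h : r.Rewrites u v) : (liftRule r).Rewrites (u.map liftSym) (v.map liftSym) := by
  induction h with
  | head s =>
    simpa [liftRule, liftSym] using
      ContextFreeRule.Rewrites.head (r := liftRule r) (s.map liftSym)
  | cons x _ ih => simpa [liftSym] using ContextFreeRule.Rewrites.cons (liftSym x) ih

lemma lift_derives {g : ContextFreeGrammar.{0} Bool} {u v : List (Symbol Bool g.NT)}
    (h : g.Derives u v) : (liftG g).Derives (u.map liftSym) (v.map liftSym) := by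
  induction h with
  | refl => rfl
  | tail _ hstep ih =>
    refine ih.trans_produces ?_
    obtain ⟨r, hr, hrw⟩ := hstep
    exact ⟨liftRule r, Finset.mem_map_of_mem _ hr, lift_rewrites hrw⟩

lemma down_derives {g : ContextFreeGrammar.{0} Bool} {u v : List (Symbol (Bool × Unit) g.NT)}
    (h : (liftG g).Derives u v) : g.Derives (u.map downSym) (v.map downSym) := by
  induction h with
  | refl => rfl
  | tail _ hstep ih =>
    refine ih.trans_produces ?_
    obtain ⟨r', hr', hrw⟩ := hstep
    obtain ⟨r, hr, hrr⟩ := Finset.mem_map.mp hr'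
    have hlr : liftRule r = r' := hrr
    rw [← hlr] at hrw
    obtain ⟨p, q, rfl, rfl⟩ := hrw.exists_parts
    refine ⟨r, hr, ?_⟩
    have := ContextFreeRule.rewrites_of_exists_parts r (p.map downSym) (q.map downSym)
    convert this using 1 <;> erw [List.map_append, List.map_append]
    · rfl
    · show _ ++ List.map downSym (List.map liftSym r.output) ++ _ = _
      simp [List.map_map, Function.comp_def]

lemma lift_lang {g : ContextFreeGrammar.{0} Bool} (x : List Bool) :
    x ∈ g.language ↔ x.map (fun b => (b, ())) ∈ (liftG g).language := by
  constructor
  · intro hx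
    rw [ContextFreeGrammar.mem_language_iff] at hx ⊢
    have := lift_derives hx
    simpa [liftSym, List.map_map, Function.comp_def, liftG] using this
  · intro hx
    rw [ContextFreeGrammar.mem_language_iff] at hx ⊢
    have := down_derives hx
    simpa [downSym, List.map_map, Function.comp_def, liftG] using this

lemma zip_replicate_unit (x : List Bool) :
    x.zip (List.replicate x.length ()) = x.map (fun b => (b, ())) := by
  induction x with
  | nil => rfl
  | cons b x ih =>
    simp only [List.length_cons, List.replicate_succ, List.zip_cons_cons, List.map_cons]
    rw [ih]

end DupProof


/-- A language `P` over `σ` is in `CFL/n` if there are a finite advice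
alphabet `Γ`, an advice function `h : ℕ → Γ*` with `|h n| = n`, and a
context-free language `L` over the track alphabet `σ × Γ` such that `x ∈ P`
iff the track string `⟨x, h(|x|)⟩` belongs to `L`. -/
def InCFLn {σ : Type} (P : Language σ) : Prop :=
  ∃ (Γ : Type) (_ : Fintype Γ) (h : ℕ → List Γ),
    (∀ n, (h n).length = n) ∧
    ∃ L : Language (σ × Γ), L.IsContextFree ∧
      ∀ x : List σ, x ∈ P ↔ x.zip (h x.length) ∈ L

open DupProof in
/-- The language `Dup = {ww : w ∈ {0,1}*}` is not in `CFL/n`; in particular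
it is not context-free. -/
theorem dup_not_in_CFLn :
    ¬ InCFLn { x : List Bool | ∃ w : List Bool, x = w ++ w } ∧
    ¬ Language.IsContextFree { x : List Bool | ∃ w : List Bool, x = w ++ w } := by
  have part1 : ¬ InCFLn { x : List Bool | ∃ w : List Bool, x = w ++ w } := by
    rintro ⟨Γ, _, h, hlen, L, ⟨g, hg⟩, hiff⟩
    refine core h hlen g (fun x => (hiff x).trans ?_)
    rw [hg]
  refine ⟨part1, fun hcf => part1 ?_⟩
  obtain ⟨g, hg⟩ := hcf
  refine ⟨Unit, inferInstance, fun n => List.replicate n (), by simp, (liftG g).language,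
    ⟨liftG g, rfl⟩, fun x => ?_⟩
  have h1 : (x ∈ { x : List Bool | ∃ w : List Bool, x = w ++ w }) ↔ x ∈ g.language := by
    rw [hg]; rfl
  refine h1.trans ?_
  show x ∈ g.language ↔ x.zip (List.replicate x.length ()) ∈ (liftG g).language
  rw [zip_replicate_unit]
  exact lift_lang x
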